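/- Every C¹ map between locally convex spaces is locally Lipschitz: if f : U → F is C¹ on an open subset U of a locally convex space E, then for each x ∈ U and each continuous seminorm q on F there exists a continuous seminorm p on E with B_p(x,1) ⊆ U and q(f(z) − f(y)) ≤ p(z − y) for all y, z ∈ B_p(x,1). -/

import Mathlib

open Filter Topology

/-- `HasMBDerivAt f x y v` : the directional (Gâteaux) derivative of `f` at `x` in the
direction `y` exists and equals `v`, in the Michal–Bastiani sense. -/
def HasMBDerivAt {G F : Type*} [AddCommGroup G] [Module ℝ G] [TopologicalSpace G]
    [AddCommGroup F] [Module ℝ F] [TopologicalSpace F]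
    (f : G → F) (x y : G) (v : F) : Prop :=
  Tendsto (fun t : ℝ => t⁻¹ • (f (x + t • y) - f x)) (𝓝[≠] (0 : ℝ)) (𝓝 v)

/-- `ContDiffMB n f U` : the map `f` is `C^n` on the open set `U` in the
Michal–Bastiani sense: there is a family `D k : U × G^k → F` of iterated directional
differentials of `f` (with `D 0 = f`), each of which is continuous on `U × G^k`. -/
def ContDiffMB {G F : Type*} [AddCommGroup G] [Module ℝ G] [TopologicalSpace G]
    [AddCommGroup F] [Module ℝ F] [TopologicalSpace F]
    (n : ℕ) (f : G → F) (U : Set G) : Prop :=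
  ∃ D : ∀ k : ℕ, G × (Fin k → G) → F,
    (∀ x y, D 0 (x, y) = f x) ∧
    (∀ k, k < n → ∀ x ∈ U, ∀ y : Fin (k + 1) → G,
      HasMBDerivAt (fun x' => D k (x', fun i : Fin k => y i.castSucc)) x (y (Fin.last k))
        (D (k + 1) (x, y))) ∧
    (∀ k, k ≤ n → ContinuousOn (D k) (U ×ˢ Set.univ))

section AuxLemmas
open Set

theorem aux_seminorm_eq_zero_of_tendsto {F : Type*} [AddCommGroup F] [Module ℝ F]
    [TopologicalSpace F] [IsTopologicalAddGroup F]
    (q : Seminorm ℝ F) (hq : Continuous ⇑q) {α : Type*} {l : Filter α} [l.NeBot]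
    {g : α → F} {a b : F} (ha : Tendsto g l (𝓝 a)) (hb : Tendsto g l (𝓝 b)) :
    q (a - b) = 0 := by
  have h : Inseparable a b := tendsto_nhds_unique_inseparable ha hb
  have h2 : Inseparable (q (a - b)) (q (b - b)) :=
    h.map (hq.comp (continuous_id.sub continuous_const))
  simpa using h2.eq

theorem aux_exists_seminorm_ball_subset {E : Type*} [AddCommGroup E] [Module ℝ E]
    [TopologicalSpace E] [IsTopologicalAddGroup E] [ContinuousSMul ℝ E]
    [LocallyConvexSpace ℝ E] {W : Set E} (hW : W ∈ 𝓝 (0 : E)) :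
    ∃ p : Seminorm ℝ E, Continuous ⇑p ∧ p.ball 0 1 ⊆ W := by
  obtain ⟨s, ⟨hs, hconv⟩, hsW⟩ := (LocallyConvexSpace.convex_basis_zero ℝ E).mem_iff.mp hW
  set C := interior s ∩ -interior s with hC
  have hopen : IsOpen C := isOpen_interior.inter isOpen_interior.neg
  have h0s : (0 : E) ∈ interior s := mem_interior_iff_mem_nhds.2 hs
  have h0 : (0 : E) ∈ C := ⟨h0s, by simpa using h0s⟩
  have hconvC : Convex ℝ C := hconv.interior.inter hconv.interior.neg
  have hbal : Balanced ℝ C := (balanced_iff_neg_mem hconvC).2 (by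
    rintro y ⟨h1, h2⟩
    exact ⟨by simpa using h2, by simpa using h1⟩)
  have habs : Absorbent ℝ C := absorbent_nhds_zero (hopen.mem_nhds h0)
  refine ⟨gaugeSeminorm hbal hconvC habs, ?_, ?_⟩
  · exact Seminorm.continuous (r := 1)
      (by rw [gaugeSeminorm_ball_one hopen]; exact hopen.mem_nhds h0)
  · rw [gaugeSeminorm_ball_one hopen]
    exact fun y hy => hsW (interior_subset hy.1)

end AuxLemmas

/-- Every `C¹` map (in the Michal–Bastiani sense) between locally convex real spaces is
locally Lipschitz: for each `x ∈ U` and each continuous seminorm `q` on `F` there is a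
continuous seminorm `p` on `E` with `B_p(x,1) ⊆ U` and
`q(f z − f y) ≤ p(z − y)` for all `y, z ∈ B_p(x,1)`. -/
theorem locallyLipschitz_of_contDiffMB_one {E F : Type*}
    [AddCommGroup E] [Module ℝ E] [TopologicalSpace E] [IsTopologicalAddGroup E]
    [ContinuousSMul ℝ E] [LocallyConvexSpace ℝ E]
    [AddCommGroup F] [Module ℝ F] [TopologicalSpace F] [IsTopologicalAddGroup F]
    [ContinuousSMul ℝ F] [LocallyConvexSpace ℝ F]
    (U : Set E) (hU : IsOpen U) (f : E → F) (hf : ContDiffMB 1 f U) :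
    ∀ x ∈ U, ∀ q : Seminorm ℝ F, Continuous ⇑q →
      ∃ p : Seminorm ℝ E, Continuous ⇑p ∧ p.ball x 1 ⊆ U ∧
        ∀ y ∈ p.ball x 1, ∀ z ∈ p.ball x 1, q (f z - f y) ≤ p (z - y) := by
  intro x hx q hq
  obtain ⟨D, hD0, hD1, hDc⟩ := hf
  set g : E → E → F := fun w u => D 1 (w, fun _ => u) with hg
  -- directional derivative of f is g
  have hderiv : ∀ w ∈ U, ∀ u : E,
      Tendsto (fun t : ℝ => t⁻¹ • (f (w + t • u) - f w)) (𝓝[≠] (0 : ℝ)) (𝓝 (g w u)) := by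
    intro w hw u
    have h := hD1 0 Nat.zero_lt_one w hw (fun _ => u)
    simp only [hD0] at h
    exact h
  -- f is continuous on U
  have hfc : ContinuousOn f U := by
    have h := hDc 0 (by norm_num)
    have h2 : ContinuousOn (fun w => D 0 (w, fun _ : Fin 0 => (0 : E))) U := by
      refine h.comp (Continuous.continuousOn (by fun_prop)) ?_
      exact fun w hw => ⟨hw, trivial⟩
    simpa only [hD0] using h2
  -- continuity of g at (x, 0)
  have hGc : ContinuousAt (fun wu : E × E => g wu.1 wu.2) (x, 0) := by
    have h := (hDc 1 le_rfl).continuousAt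
      (show U ×ˢ (Set.univ : Set (Fin 1 → E)) ∈ 𝓝 ((x, fun _ => (0 : E)) : E × (Fin 1 → E)) from
        (hU.prod isOpen_univ).mem_nhds ⟨hx, trivial⟩)
    have hcont : Continuous fun wu : E × E => ((wu.1, fun _ : Fin 1 => wu.2) : E × (Fin 1 → E)) := by
      fun_prop
    exact ContinuousAt.comp (g := D 1)
      (f := fun wu : E × E => ((wu.1, fun _ : Fin 1 => wu.2) : E × (Fin 1 → E)))
      (x := ((x, 0) : E × E)) h hcont.continuousAt
  -- q (g x 0) = 0
  have hq0 : q (g x 0) = 0 := by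
    have h1 := hderiv x hx 0
    have h2 : Tendsto (fun t : ℝ => t⁻¹ • (f (x + t • (0 : E)) - f x)) (𝓝[≠] (0 : ℝ))
        (𝓝 (0 : F)) := by
      simp only [smul_zero, add_zero, sub_self]
      exact tendsto_const_nhds
    simpa using aux_seminorm_eq_zero_of_tendsto q hq h1 h2
  -- smallness region
  have hsmall : ∀ᶠ wu : E × E in 𝓝 (x, 0), q (g wu.1 wu.2) < 1 / 2 := by
    have h : Tendsto (fun wu : E × E => q (g wu.1 wu.2)) (𝓝 (x, 0)) (𝓝 (q (g x 0))) :=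
      hq.continuousAt.comp hGc
    rw [hq0] at h
    exact h.eventually_lt_const (by norm_num)
  obtain ⟨V, hV, W, hW, hVW⟩ := mem_nhds_prod_iff.mp hsmall
  have hV' : V ∩ U ∈ 𝓝 x := Filter.inter_mem hV (hU.mem_nhds hx)
  have hW1 : (fun u : E => x + u) ⁻¹' (V ∩ U) ∈ 𝓝 (0 : E) := by
    apply ((continuous_add_left x).continuousAt (x := (0 : E))).preimage_mem_nhds
    simpa only [add_zero] using hV'
  obtain ⟨p₁, hp₁c, hp₁b⟩ := aux_exists_seminorm_ball_subset hW1
  obtain ⟨p₂, hp₂c, hp₂b⟩ := aux_exists_seminorm_ball_subset hW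
  set p : Seminorm ℝ E := p₁ ⊔ p₂ with hp
  have hpc : Continuous ⇑p := by
    rw [hp, Seminorm.coe_sup]
    exact hp₁c.max hp₂c
  have hball_sub : ∀ w ∈ p.ball x 1, w ∈ V ∩ U := by
    intro w hw
    have hwp : p (w - x) < 1 := hw
    rw [hp, Seminorm.sup_apply, sup_lt_iff] at hwp
    have h2 : (w - x) ∈ p₁.ball 0 1 := by
      simp only [Seminorm.mem_ball, sub_zero]
      exact hwp.1
    simpa using hp₁b h2
  have hU_sub : p.ball x 1 ⊆ U := fun w hw => (hball_sub w hw).2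
  -- q-homogeneity of g in the direction
  have hhom : ∀ w ∈ U, ∀ c : ℝ, c ≠ 0 → ∀ u : E, q (g w (c • u) - c • g w u) = 0 := by
    intro w hw c hc u
    have h1 := hderiv w hw (c • u)
    have hmap : Tendsto (fun t : ℝ => c * t) (𝓝[≠] (0 : ℝ)) (𝓝[≠] (0 : ℝ)) := by
      apply tendsto_nhdsWithin_of_tendsto_nhds_of_eventually_within
      · have h : Tendsto (fun t : ℝ => c * t) (𝓝 (0 : ℝ)) (𝓝 (c * 0)) :=
          (continuous_mul_left c).tendsto 0
        rw [mul_zero] at h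
        exact h.mono_left nhdsWithin_le_nhds
      · filter_upwards [self_mem_nhdsWithin] with t ht
        exact mul_ne_zero hc ht
    have h3 := (hderiv w hw u).comp hmap
    have h4 := h3.const_smul c
    have h2 : Tendsto (fun t : ℝ => t⁻¹ • (f (w + t • (c • u)) - f w)) (𝓝[≠] (0 : ℝ))
        (𝓝 (c • g w u)) := by
      refine h4.congr fun t => ?_
      show c • ((c * t)⁻¹ • (f (w + (c * t) • u) - f w)) = t⁻¹ • (f (w + t • (c • u)) - f w)
      have e1 : t • (c • u) = (c * t) • u := by rw [smul_smul, mul_comm]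
      rw [e1, smul_smul, mul_inv, ← mul_assoc, mul_inv_cancel₀ hc, one_mul]
    exact aux_seminorm_eq_zero_of_tendsto q hq h1 h2
  -- key estimate
  have hkey : ∀ w ∈ p.ball x 1, ∀ v : E, q (g w v) ≤ p v / 2 := by
    intro w hw v
    obtain ⟨hwV, hwU⟩ := hball_sub w hw
    have hb : ∀ r : ℝ, p v < r → q (g w v) ≤ r / 2 := by
      intro r hr
      have hr0 : (0 : ℝ) < r := lt_of_le_of_lt (apply_nonneg p v) hr
      have hu : (r⁻¹ • v) ∈ W := by
        apply hp₂b
        show p₂ (r⁻¹ • v - 0) < 1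
        rw [sub_zero, map_smul_eq_mul]
        have hle : p₂ v ≤ p v := by
          rw [hp, Seminorm.sup_apply]
          exact le_max_right _ _
        calc ‖r⁻¹‖ * p₂ v ≤ r⁻¹ * p v := by
              rw [Real.norm_eq_abs, abs_of_pos (inv_pos.2 hr0)]
              exact mul_le_mul_of_nonneg_left hle (inv_nonneg.2 hr0.le)
          _ < r⁻¹ * r := by exact mul_lt_mul_of_pos_left hr (inv_pos.2 hr0)
          _ = 1 := inv_mul_cancel₀ hr0.ne'
      have hsm : q (g w (r⁻¹ • v)) < 1 / 2 := by
        have h9 : ((w, r⁻¹ • v) : E × E) ∈ V ×ˢ W := Set.mem_prod.mpr ⟨hwV, hu⟩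
        simpa using hVW h9
      have hh := hhom w hwU r hr0.ne' (r⁻¹ • v)
      rw [smul_inv_smul₀ hr0.ne'] at hh
      have tri : q (g w v) ≤ q (g w v - r • g w (r⁻¹ • v)) + q (r • g w (r⁻¹ • v)) := by
        have h8 := map_add_le_add q (g w v - r • g w (r⁻¹ • v)) (r • g w (r⁻¹ • v))
        simpa using h8
      rw [hh, zero_add, map_smul_eq_mul, Real.norm_eq_abs, abs_of_pos hr0] at tri
      calc q (g w v) ≤ r * q (g w (r⁻¹ • v)) := tri
        _ ≤ r * (1 / 2) := mul_le_mul_of_nonneg_left hsm.le hr0.le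
        _ = r / 2 := by ring
    have h2 : 2 * q (g w v) ≤ p v := by
      refine le_of_forall_gt_imp_ge_of_dense fun r hr => ?_
      linarith [hb r hr]
    linarith
  refine ⟨p, hpc, hU_sub, ?_⟩
  intro y hy z hz
  set v : E := z - y with hv
  set wf : ℝ → E := fun t => y + t • v with hwf
  have hyx : p (y - x) < 1 := hy
  have hzx : p (z - x) < 1 := hz
  have hwball : ∀ t ∈ Set.Icc (0 : ℝ) 1, wf t ∈ p.ball x 1 := by
    intro t ht
    show p (wf t - x) < 1
    have e : wf t - x = (1 - t) • (y - x) + t • (z - x) := by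
      simp only [hwf, hv]
      module
    have ht0 : (0:ℝ) ≤ t := ht.1
    have h1t : (0:ℝ) ≤ 1 - t := by linarith [ht.2]
    rw [e]
    calc p ((1 - t) • (y - x) + t • (z - x))
        ≤ p ((1 - t) • (y - x)) + p (t • (z - x)) := map_add_le_add p _ _
      _ = (1 - t) * p (y - x) + t * p (z - x) := by
          rw [map_smul_eq_mul, map_smul_eq_mul, Real.norm_eq_abs, Real.norm_eq_abs,
            abs_of_nonneg (by linarith [ht.2] : (0:ℝ) ≤ 1 - t), abs_of_nonneg ht.1]
      _ ≤ (1 - t) * max (p (y - x)) (p (z - x)) + t * max (p (y - x)) (p (z - x)) := by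
          gcongr
          · exact le_max_left _ _
          · exact le_max_right _ _
      _ = max (p (y - x)) (p (z - x)) := by ring
      _ < 1 := max_lt hyx hzx
  set φ : ℝ → ℝ := fun t => q (f (wf t) - f y) with hφ
  have hwc : Continuous wf := by fun_prop
  have hφc : ContinuousOn φ (Set.Icc 0 1) := by
    have h1 : ContinuousOn (fun t => f (wf t)) (Set.Icc 0 1) :=
      hfc.comp hwc.continuousOn (fun t ht => hU_sub (hwball t ht))
    exact (hq.comp (continuous_id.sub continuous_const)).comp_continuousOn h1
  have key : ∀ ⦃t⦄, t ∈ Set.Icc (0 : ℝ) 1 → φ t ≤ p v / 2 * t := by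
    apply image_le_of_liminf_slope_right_le_deriv_boundary (B' := fun _ => p v / 2) hφc
    · show φ 0 ≤ p v / 2 * 0
      simp [hφ, hwf]
    · fun_prop
    · intro t ht
      simpa using (hasDerivWithinAt_id t (Set.Ici t)).const_mul (p v / 2)
    · intro t ht r hr
      have hwt : wf t ∈ p.ball x 1 := hwball t ⟨ht.1, ht.2.le⟩
      have hgle : q (g (wf t) v) < r := lt_of_le_of_lt (hkey (wf t) hwt v) hr
      have hsub : Tendsto (fun s : ℝ => s - t) (𝓝[>] t) (𝓝[≠] (0 : ℝ)) := by
        apply Tendsto.mono_right _ (nhdsWithin_mono 0 (fun a ha => ne_of_gt ha))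
        apply tendsto_nhdsWithin_of_tendsto_nhds_of_eventually_within
        · have h : Tendsto (fun s : ℝ => s - t) (𝓝 t) (𝓝 (t - t)) :=
            (continuous_sub_right t).tendsto t
          rw [sub_self] at h
          exact h.mono_left nhdsWithin_le_nhds
        · filter_upwards [self_mem_nhdsWithin] with s hs
          exact sub_pos.2 (show t < s from hs)
      have h5 : Tendsto (fun s : ℝ => q ((s - t)⁻¹ • (f (wf t + (s - t) • v) - f (wf t))))
          (𝓝[>] t) (𝓝 (q (g (wf t) v))) :=
        (hq.tendsto _).comp ((hderiv (wf t) (hU_sub hwt) v).comp hsub)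
      have h6 : ∀ᶠ s in 𝓝[>] t,
          q ((s - t)⁻¹ • (f (wf t + (s - t) • v) - f (wf t))) < r :=
        h5.eventually_lt_const hgle
      refine ((h6.and self_mem_nhdsWithin).mono ?_).frequently
      rintro s ⟨hs1, hs2⟩
      have hst : (0 : ℝ) < s - t := sub_pos.2 hs2
      have e2 : wf t + (s - t) • v = wf s := by
        simp only [hwf]
        module
      rw [e2] at hs1
      have tri : φ s - φ t ≤ q (f (wf s) - f (wf t)) := by
        have h7 : q (f (wf s) - f y) ≤ q (f (wf s) - f (wf t)) + q (f (wf t) - f y) := by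
          have h8 := map_add_le_add q (f (wf s) - f (wf t)) (f (wf t) - f y)
          simpa using h8
        simp only [hφ]
        linarith
      have e3 : q ((s - t)⁻¹ • (f (wf s) - f (wf t)))
          = q (f (wf s) - f (wf t)) / (s - t) := by
        rw [map_smul_eq_mul, Real.norm_eq_abs, abs_of_pos (inv_pos.2 hst), inv_mul_eq_div]
      rw [e3] at hs1
      show slope φ t s < r
      rw [slope_def_field]
      calc (φ s - φ t) / (s - t) ≤ q (f (wf s) - f (wf t)) / (s - t) := by gcongr
        _ < r := hs1
  have h1 := key (Set.right_mem_Icc.2 zero_le_one)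
  have e5 : φ 1 = q (f z - f y) := by
    simp [hφ, hwf, hv]
  have hnn := apply_nonneg p v
  calc q (f z - f y) = φ 1 := e5.symm
    _ ≤ p v / 2 * 1 := h1
    _ ≤ p v := by linarith
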